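/- Theorem (transfer function of the spectral discretization): with A_N as above and B_N = (0_n, …, 0_n, I_n)* the (N+1)n × n matrix selecting the last block, for all λ such that λI − A_N and λ I_n − A₀ − Σ_{i=1}^m A_i p_N(−τᵢ; λ) are invertible, B_N* (λ I_{(N+1)n} − A_N)⁻¹ B_N = (λ I_n − A₀ − Σ_{i=1}^m A_i p_N(−τᵢ; λ))⁻¹. -/

import Mathlib

open Matrix Polynomial

/-- `p` is the collocation polynomial `p_N(·; z)` on the mesh `θ`
(node `θ 0 = 0`, remaining nodes `θ i.succ`). -/
def IsColloc {N : ℕ} (θ : Fin (N + 1) → ℝ) (z : ℂ) (p : Polynomial ℂ) : Prop :=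
  p.degree ≤ (N : ℕ) ∧ p.eval 0 = 1 ∧
    ∀ i : Fin N, (Polynomial.derivative p).eval ((θ i.succ : ℝ) : ℂ) =
      z * p.eval ((θ i.succ : ℝ) : ℂ)

lemma interp_sum {N : ℕ} (v : Fin (N + 1) → ℂ) (hv : Function.Injective v)
    (p : Polynomial ℂ) (hdeg : p.degree ≤ (N : ℕ)) :
    p = ∑ j : Fin (N + 1), Polynomial.C (p.eval (v j)) * Lagrange.basis Finset.univ v j := by
  have h := Lagrange.eq_interpolate (s := Finset.univ) (v := v) (hv.injOn)
    (f := p) (by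
      rw [Finset.card_univ, Fintype.card_fin]
      exact lt_of_le_of_lt hdeg (by exact_mod_cast Nat.lt_succ_self N))
  conv_lhs => rw [h]
  rw [Lagrange.interpolate_apply]

lemma interp_eval {N : ℕ} (v : Fin (N + 1) → ℂ) (hv : Function.Injective v)
    (p : Polynomial ℂ) (hdeg : p.degree ≤ (N : ℕ)) (x : ℂ) :
    p.eval x = ∑ j : Fin (N + 1), p.eval (v j) * (Lagrange.basis Finset.univ v j).eval x := by
  conv_lhs => rw [interp_sum v hv p hdeg]
  simp [eval_finset_sum]

lemma interp_deriv {N : ℕ} (v : Fin (N + 1) → ℂ) (hv : Function.Injective v)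
    (p : Polynomial ℂ) (hdeg : p.degree ≤ (N : ℕ)) (x : ℂ) :
    (Polynomial.derivative p).eval x = ∑ j : Fin (N + 1),
      p.eval (v j) * (Polynomial.derivative (Lagrange.basis Finset.univ v j)).eval x := by
  conv_lhs => rw [interp_sum v hv p hdeg]
  simp [derivative_sum, eval_finset_sum]


/-- Theorem 1 (transfer function of the spectral discretization):
`B_N* (λ I − A_N)⁻¹ B_N = (λ Iₙ − A₀ − Σᵢ Aᵢ p_N(−τᵢ; λ))⁻¹`
whenever both matrices are invertible, with `B_N` the selector of the last block. -/
theorem stmt_10 {N n m : ℕ} (θ : Fin (N + 1) → ℝ) (hθinj : Function.Injective θ)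
    (hθ0 : θ 0 = 0)
    (A₀ : Matrix (Fin n) (Fin n) ℂ) (A : Fin m → Matrix (Fin n) (Fin n) ℂ)
    (τ : Fin m → ℝ) (hτ : ∀ l, 0 ≤ τ l)
    (D₁₁ : Matrix (Fin N) (Fin N) ℂ)
    (hD₁₁ : ∀ i k : Fin N, D₁₁ i k =
      (Polynomial.derivative
        (Lagrange.basis Finset.univ (fun j => ((θ j : ℝ) : ℂ)) k.succ)).eval
          ((θ i.succ : ℝ) : ℂ))
    (D₁₂ : Fin N → ℂ)
    (hD₁₂ : ∀ i : Fin N, D₁₂ i =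
      (Polynomial.derivative
        (Lagrange.basis Finset.univ (fun j => ((θ j : ℝ) : ℂ)) 0)).eval
          ((θ i.succ : ℝ) : ℂ))
    -- the blocks `Γₖ` (interior nodes) and `Γ₀`
    (Γ : Fin N → Matrix (Fin n) (Fin n) ℂ)
    (hΓ : ∀ k : Fin N, Γ k = ∑ l : Fin m,
      ((Lagrange.basis Finset.univ (fun j => ((θ j : ℝ) : ℂ)) k.succ).eval
        ((-(τ l) : ℝ) : ℂ)) • A l)
    (Γ₀ : Matrix (Fin n) (Fin n) ℂ)
    (hΓ₀ : Γ₀ = A₀ + ∑ l : Fin m,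
      ((Lagrange.basis Finset.univ (fun j => ((θ j : ℝ) : ℂ)) 0).eval
        ((-(τ l) : ℝ) : ℂ)) • A l)
    -- the discretization matrix `A_N`
    (AN : Matrix ((Fin N × Fin n) ⊕ Fin n) ((Fin N × Fin n) ⊕ Fin n) ℂ)
    (hAN : AN = Matrix.fromBlocks
      (fun p q => D₁₁ p.1 q.1 * (if p.2 = q.2 then (1 : ℂ) else 0))
      (fun p b => D₁₂ p.1 * (if p.2 = b then (1 : ℂ) else 0))
      (fun a q => Γ q.1 a q.2)
      Γ₀)
    -- `B_N` selects the last block of `n` coordinates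
    (B : Matrix ((Fin N × Fin n) ⊕ Fin n) (Fin n) ℂ)
    (hB : B = Matrix.of (fun q j => Sum.elim (fun _ => (0 : ℂ))
      (fun a => if a = j then (1 : ℂ) else 0) q))
    (z : ℂ)
    (p : Polynomial ℂ) (hp : IsColloc θ z p)
    (hinv1 : IsUnit (z • (1 : Matrix ((Fin N × Fin n) ⊕ Fin n) ((Fin N × Fin n) ⊕ Fin n) ℂ)
      - AN).det)
    (hinv2 : IsUnit (z • (1 : Matrix (Fin n) (Fin n) ℂ) - A₀ -
      ∑ i : Fin m, (p.eval ((-(τ i) : ℝ) : ℂ)) • A i).det) :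
    Bᴴ * (z • (1 : Matrix ((Fin N × Fin n) ⊕ Fin n) ((Fin N × Fin n) ⊕ Fin n) ℂ) - AN)⁻¹ * B =
      (z • (1 : Matrix (Fin n) (Fin n) ℂ) - A₀ -
        ∑ i : Fin m, (p.eval ((-(τ i) : ℝ) : ℂ)) • A i)⁻¹ := by
  obtain ⟨hdeg, hp0, hcol⟩ := hp
  set v : Fin (N + 1) → ℂ := fun j => ((θ j : ℝ) : ℂ) with hv
  have hvinj : Function.Injective v := fun a b h => hθinj (by simpa [hv] using h)
  have hv0 : v 0 = 0 := by simp [hv, hθ0]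
  set S : Matrix (Fin n) (Fin n) ℂ :=
    z • (1 : Matrix (Fin n) (Fin n) ℂ) - A₀ - ∑ i : Fin m, (p.eval ((-(τ i) : ℝ) : ℂ)) • A i
    with hS
  have key : ∀ l : Fin m, p.eval ((-(τ l) : ℝ) : ℂ) =
      (Lagrange.basis Finset.univ v 0).eval ((-(τ l) : ℝ) : ℂ)
      + ∑ k : Fin N, p.eval (v k.succ) *
        (Lagrange.basis Finset.univ v k.succ).eval ((-(τ l) : ℝ) : ℂ) := by
    intro l
    rw [interp_eval v hvinj p hdeg, Fin.sum_univ_succ, hv0, hp0, one_mul]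
  have hSeq : S = z • (1 : Matrix (Fin n) (Fin n) ℂ) - Γ₀
      - ∑ k : Fin N, p.eval (v k.succ) • Γ k := by
    rw [hS, hΓ₀]
    have hsum : ∑ i : Fin m, (p.eval ((-(τ i) : ℝ) : ℂ)) • A i
        = (∑ l : Fin m, ((Lagrange.basis Finset.univ v 0).eval ((-(τ l) : ℝ) : ℂ)) • A l)
          + ∑ k : Fin N, p.eval (v k.succ) •
            (∑ l : Fin m, ((Lagrange.basis Finset.univ v k.succ).eval ((-(τ l) : ℝ) : ℂ)) • A l) := by
      simp_rw [key, add_smul, Finset.sum_add_distrib, Finset.smul_sum, smul_smul, Finset.sum_smul]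
      rw [Finset.sum_comm]
    rw [hsum]
    simp_rw [hΓ]
    abel
  have hSinv : S * S⁻¹ = 1 := Matrix.mul_nonsing_inv S hinv2
  -- the collocation row identity
  have hrow : ∀ k : Fin N, z * p.eval (v k.succ)
      - (∑ k' : Fin N, D₁₁ k k' * p.eval (v k'.succ)) - D₁₂ k = 0 := by
    intro k
    have h := interp_deriv v hvinj p hdeg (v k.succ)
    rw [Fin.sum_univ_succ, hv0, hp0, one_mul, hcol k] at h
    rw [hD₁₂ k]
    have hD : ∀ k' : Fin N, D₁₁ k k' =
        (Polynomial.derivative (Lagrange.basis Finset.univ v k'.succ)).eval (v k.succ) :=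
      fun k' => hD₁₁ k k'
    simp_rw [hD]
    have : ∑ k' : Fin N, (Polynomial.derivative (Lagrange.basis Finset.univ v k'.succ)).eval
        (v k.succ) * p.eval (v k'.succ)
        = ∑ k' : Fin N, p.eval (v k'.succ) *
          (Polynomial.derivative (Lagrange.basis Finset.univ v k'.succ)).eval (v k.succ) := by
      simp_rw [mul_comm]
    rw [this]
    linear_combination h
  set M := z • (1 : Matrix ((Fin N × Fin n) ⊕ Fin n) ((Fin N × Fin n) ⊕ Fin n) ℂ) - AN with hM
  set X : Matrix ((Fin N × Fin n) ⊕ Fin n) (Fin n) ℂ :=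
    Matrix.of (fun q j => Sum.elim (fun pr => p.eval (v pr.1.succ) * S⁻¹ pr.2 j)
      (fun a => S⁻¹ a j) q) with hX
  have hMX : M * X = B := by
    ext q j
    rcases q with ⟨k, i⟩ | a
    · show (M * X) (Sum.inl (k, i)) j = _
      rw [Matrix.mul_apply]
      rw [Fintype.sum_sum_type]
      simp only [hM, hAN, hB, hX, Matrix.sub_apply, Matrix.smul_apply, Matrix.one_apply,
        Matrix.fromBlocks_apply₁₁, Matrix.fromBlocks_apply₁₂, Matrix.fromBlocks, Matrix.of_apply,
        Sum.elim_inl, Sum.elim_inr, smul_eq_mul, Sum.inl.injEq, Prod.mk.injEq]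
      simp only [reduceCtorEq, if_false, sub_mul, mul_ite, ite_mul, zero_mul, mul_zero,
        mul_one, one_mul, Finset.sum_sub_distrib, Finset.sum_ite_eq, Finset.mem_univ, if_true,
        zero_sub, Finset.sum_neg_distrib, Fintype.sum_prod_type]
      simp only [neg_mul, ite_mul, zero_mul, Finset.sum_neg_distrib, Finset.sum_ite_eq,
        Finset.mem_univ, if_true]
      have e : ∑ x : Fin N, D₁₁ k x * (Polynomial.eval (v x.succ) p * S⁻¹ i j)
          = (∑ x : Fin N, D₁₁ k x * Polynomial.eval (v x.succ) p) * S⁻¹ i j := by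
        rw [Finset.sum_mul]; simp [mul_assoc]
      rw [e]
      linear_combination (hrow k) * S⁻¹ i j
    · show (M * X) (Sum.inr a) j = _
      rw [Matrix.mul_apply, Fintype.sum_sum_type]
      simp only [hM, hAN, hB, hX, Matrix.sub_apply, Matrix.smul_apply, Matrix.one_apply,
        Matrix.fromBlocks_apply₂₁, Matrix.fromBlocks_apply₂₂, Matrix.fromBlocks, Matrix.of_apply,
        Sum.elim_inl, Sum.elim_inr, smul_eq_mul, Sum.inr.injEq, reduceCtorEq, if_false]
      set T := S⁻¹ with hT
      have h1 : (S * T) a j = (if a = j then 1 else 0) := by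
        rw [hT, hSinv]; simp [Matrix.one_apply]
      rw [← h1, Matrix.mul_apply, hSeq]
      simp only [Matrix.sub_apply, Matrix.smul_apply, Matrix.one_apply, Matrix.sum_apply,
        smul_eq_mul, sub_mul, Finset.sum_sub_distrib, Finset.sum_mul, mul_zero, zero_sub,
        neg_mul, Finset.sum_neg_distrib, Fintype.sum_prod_type]
      have hcomm : (∑ x : Fin N, ∑ x_1 : Fin n,
            Γ x a x_1 * (Polynomial.eval (v x.succ) p * T x_1 j))
          = ∑ x_1 : Fin n, ∑ x : Fin N,
            Polynomial.eval (v x.succ) p * Γ x a x_1 * T x_1 j := by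
        rw [Finset.sum_comm]
        exact Finset.sum_congr rfl fun _ _ => Finset.sum_congr rfl fun _ _ => by ring
      rw [hcomm]
      ring
  have hXeq : X = M⁻¹ * B := by
    rw [← hMX, ← Matrix.mul_assoc, Matrix.nonsing_inv_mul M hinv1, Matrix.one_mul]
  rw [Matrix.mul_assoc, ← hXeq]
  ext i j
  rw [Matrix.mul_apply, Fintype.sum_sum_type]
  simp [hB, hX, Matrix.conjTranspose_apply]
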